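/- For every α ∈ (0,1), letting p* = 1/(1 + 2^{α/(1−α)}), the strict inequality α(log 3 − p*/3) + (1−α)h(p*) > α(log 3 − 1) + (1−α)·log(1 + 2^{α/(1−α)}) holds; consequently, α(log 3 − p*/3) + (1−α)h(p*) > α(log 3 − p) + (1−α)h(p) for every p ∈ [0,1/2]. -/

import Mathlib

open Real

/-- The binary entropy function (base-2 logarithm); `Real.logb 2 0 = 0`, so the
convention `0 · log 0 = 0` holds automatically. -/
noncomputable def binEnt (p : ℝ) : ℝ := -(p * logb 2 p) - (1 - p) * logb 2 (1 - p)

lemma gibbs_log (p q : ℝ) (hp0 : 0 < p) (hp1 : p < 1) (hq0 : 0 < q) (hq1 : q < 1) :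
    -(p * Real.log p) - (1 - p) * Real.log (1 - p) ≤
      -(p * Real.log q) - (1 - p) * Real.log (1 - q) := by
  have h1 : Real.log q - Real.log p ≤ q / p - 1 := by
    have := Real.log_le_sub_one_of_pos (div_pos hq0 hp0)
    rwa [Real.log_div hq0.ne' hp0.ne'] at this
  have h2 : Real.log (1 - q) - Real.log (1 - p) ≤ (1 - q) / (1 - p) - 1 := by
    have := Real.log_le_sub_one_of_pos
      (div_pos (by linarith : (0:ℝ) < 1 - q) (by linarith : (0:ℝ) < 1 - p))
    rwa [Real.log_div (by linarith) (by linarith)] at this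
  have h1' : p * (Real.log q - Real.log p) ≤ q - p := by
    have e1 : p * (q / p - 1) = q - p := by field_simp
    calc p * (Real.log q - Real.log p) ≤ p * (q / p - 1) :=
          mul_le_mul_of_nonneg_left h1 hp0.le
      _ = q - p := e1
  have h2' : (1 - p) * (Real.log (1 - q) - Real.log (1 - p)) ≤ p - q := by
    have h1p : (1:ℝ) - p ≠ 0 := by linarith
    have e2 : (1 - p) * ((1 - q) / (1 - p) - 1) = p - q := by
      field_simp
      ring
    calc (1 - p) * (Real.log (1 - q) - Real.log (1 - p))
        ≤ (1 - p) * ((1 - q) / (1 - p) - 1) :=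
          mul_le_mul_of_nonneg_left h2 (by linarith)
      _ = p - q := e2
  nlinarith [h1', h2']

lemma binEnt_le (t p : ℝ) (ht : 1 ≤ t) (hp0 : 0 ≤ p) (hp : p ≤ 1 / 2) :
    binEnt p ≤ logb 2 (1 + t) - (1 - p) * logb 2 t := by
  have ht0 : (0:ℝ) < t := by linarith
  have ht1 : (0:ℝ) < 1 + t := by linarith
  rcases eq_or_lt_of_le hp0 with h0 | h0
  · simp only [binEnt, ← h0]
    norm_num
    exact Real.logb_le_logb_of_le one_lt_two ht0 (by linarith)
  · -- 0 < p
    have hp1 : p < 1 := by linarith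
    set q : ℝ := 1 / (1 + t) with hq
    have hq0 : 0 < q := by positivity
    have hq1 : q < 1 := by
      rw [hq, div_lt_one ht1]; linarith
    have key := gibbs_log p q h0 hp1 hq0 hq1
    have hlq : Real.log q = -Real.log (1 + t) := by
      rw [hq, Real.log_div one_ne_zero ht1.ne', Real.log_one]; ring
    have h1mq : 1 - q = t / (1 + t) := by
      rw [hq]; field_simp; ring
    have hl1mq : Real.log (1 - q) = Real.log t - Real.log (1 + t) := by
      rw [h1mq, Real.log_div ht0.ne' ht1.ne']
    rw [hlq, hl1mq] at key
    have hlog2 : (0:ℝ) < Real.log 2 := Real.log_pos one_lt_two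
    have : binEnt p = (-(p * Real.log p) - (1 - p) * Real.log (1 - p)) / Real.log 2 := by
      simp only [binEnt, Real.logb]; ring
    rw [this]
    have hrhs : logb 2 (1 + t) - (1 - p) * logb 2 t
        = (-(p * (-Real.log (1 + t))) - (1 - p) * (Real.log t - Real.log (1 + t))) / Real.log 2 := by
      simp only [Real.logb]; ring
    rw [hrhs]
    gcongr

/-- For `α ∈ (0,1)` and `p* = 1/(1 + 2^{α/(1−α)})`, we have the strict
inequality `α(log 3 − p*/3) + (1−α)h(p*) > α(log 3 − 1) + (1−α)·log(1 + 2^{α/(1−α)})`;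
consequently `α(log 3 − p*/3) + (1−α)h(p*) > α(log 3 − p) + (1−α)h(p)` for every
`p ∈ [0,1/2]`. This is the separation between the average- and maximal-error
bounds for Dueck's contraction MAC underlying Corollary 5 of the paper. -/
theorem contraction_avg_gt_max (α : ℝ) (hα : α ∈ Set.Ioo (0 : ℝ) 1) :
    α * (logb 2 3 - (1 / (1 + (2 : ℝ) ^ (α / (1 - α)))) / 3) +
        (1 - α) * binEnt (1 / (1 + (2 : ℝ) ^ (α / (1 - α)))) >
      α * (logb 2 3 - 1) + (1 - α) * logb 2 (1 + (2 : ℝ) ^ (α / (1 - α))) ∧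
    ∀ p ∈ Set.Icc (0 : ℝ) (1 / 2),
      α * (logb 2 3 - (1 / (1 + (2 : ℝ) ^ (α / (1 - α)))) / 3) +
          (1 - α) * binEnt (1 / (1 + (2 : ℝ) ^ (α / (1 - α)))) >
        α * (logb 2 3 - p) + (1 - α) * binEnt p := by
  obtain ⟨hα0, hα1⟩ := hα
  have h1α : (0:ℝ) < 1 - α := by linarith
  set t : ℝ := (2 : ℝ) ^ (α / (1 - α)) with htdef
  have ht1 : 1 < t := by
    rw [htdef, Real.one_lt_rpow_iff_of_pos (by norm_num)]
    exact Or.inl ⟨by norm_num, div_pos hα0 h1α⟩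
  have ht0 : (0:ℝ) < t := by linarith
  have ht1' : (0:ℝ) < 1 + t := by linarith
  have hne : (1:ℝ) + t ≠ 0 := ht1'.ne'
  have hane : (1:ℝ) - α ≠ 0 := h1α.ne'
  have hlogt : logb 2 t = α / (1 - α) := Real.logb_rpow (by norm_num) (by norm_num)
  have hp0 : (0:ℝ) < 1 / (1 + t) := by positivity
  have hE : binEnt (1 / (1 + t)) = logb 2 (1 + t) - (t / (1 + t)) * (α / (1 - α)) := by
    have h1 : logb 2 (1 / (1 + t)) = -logb 2 (1 + t) := by
      rw [Real.logb_div one_ne_zero hne, Real.logb_one]; ring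
    have h2 : (1:ℝ) - 1 / (1 + t) = t / (1 + t) := by field_simp; ring
    have h3 : logb 2 (t / (1 + t)) = logb 2 t - logb 2 (1 + t) :=
      Real.logb_div ht0.ne' hne
    rw [binEnt, h1, h2, h3, hlogt]
    field_simp
    ring
  have key1 : α * (logb 2 3 - (1 / (1 + t)) / 3) + (1 - α) * binEnt (1 / (1 + t)) >
      α * (logb 2 3 - 1) + (1 - α) * logb 2 (1 + t) := by
    rw [hE]
    have hexp : α * (logb 2 3 - (1 / (1 + t)) / 3) +
        (1 - α) * (logb 2 (1 + t) - (t / (1 + t)) * (α / (1 - α))) -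
        (α * (logb 2 3 - 1) + (1 - α) * logb 2 (1 + t)) = (2 / 3) * (α * (1 / (1 + t))) := by
      field_simp
      ring
    nlinarith [mul_pos hα0 hp0]
  refine ⟨key1, fun p hp => ?_⟩
  obtain ⟨hpl, hpr⟩ := hp
  have hb := binEnt_le t p ht1.le hpl hpr
  rw [hlogt] at hb
  have h' : (1 - α) * binEnt p ≤ (1 - α) * (logb 2 (1 + t) - (1 - p) * (α / (1 - α))) :=
    mul_le_mul_of_nonneg_left hb h1α.le
  have hid : (1 - α) * (logb 2 (1 + t) - (1 - p) * (α / (1 - α))) =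
      (1 - α) * logb 2 (1 + t) - (α - α * p) := by
    field_simp
  have step : α * (logb 2 3 - p) + (1 - α) * binEnt p ≤
      α * (logb 2 3 - 1) + (1 - α) * logb 2 (1 + t) := by
    have e1 : α * (logb 2 3 - p) = α * logb 2 3 - α * p := by ring
    have e2 : α * (logb 2 3 - 1) = α * logb 2 3 - α := by ring
    linarith [h', hid]
  exact step.trans_lt key1
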